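/- Let f : ℝ → ℝⁿ be continuous with image F = f(ℝ), let x ∈ ℝ and 𝕍 ∈ 𝕊^{n−1}. If for every φ > 0, lim_{r→0} ℋ¹_∞((F ∩ B(f(x),r)) \ S_D(f(x),𝕍,φ)) / r = 0, then for every φ > 0 there exists δ > 0 such that f((x−δ, x+δ)) ⊂ S_D(f(x), 𝕍, φ). -/

import Mathlib

open ENNReal

open Set Filter

/-- 1-dimensional Hausdorff content: infimum over countable covers of the
sum of diameters. -/
noncomputable def hContent {n : ℕ} (F : Set (EuclideanSpace ℝ (Fin n))) : ℝ≥0∞ :=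
  ⨅ (U : ℕ → Set (EuclideanSpace ℝ (Fin n))) (_ : F ⊆ ⋃ i, U i),
    ∑' i, EMetric.diam (U i)

/-- The closed double cone with vertex `p`, direction `V` and opening `φ`:
the closure of the set of points `y` such that `y - p` makes an angle at most
`φ/2` with `V` or with `-V`. -/
def doubleCone {n : ℕ} (p V : EuclideanSpace ℝ (Fin n)) (φ : ℝ) :
    Set (EuclideanSpace ℝ (Fin n)) :=
  closure {y | InnerProductGeometry.angle (y - p) V ≤ φ / 2 ∨
    InnerProductGeometry.angle (y - p) (-V) ≤ φ / 2}

section Aux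

open InnerProductGeometry RealInnerProductSpace

variable {E : Type*} [NormedAddCommGroup E] [InnerProductSpace ℝ E]

lemma norm_perp_aux (W Y : E) (hW : ‖W‖ = 1) :
    ‖Y - ⟪Y, W⟫ • W‖ = ‖Y‖ * Real.sin (angle Y W) := by
  have hYW : ⟪Y, W⟫ = ‖Y‖ * Real.cos (angle Y W) := by
    rcases eq_or_ne Y 0 with rfl | hY
    · simp
    · have h0 : ‖Y‖ ≠ 0 := norm_ne_zero_iff.2 hY
      rw [cos_angle, hW]
      field_simp
  have sinY : 0 ≤ Real.sin (angle Y W) :=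
    Real.sin_nonneg_of_nonneg_of_le_pi (angle_nonneg _ _) (angle_le_pi _ _)
  have h1 : ‖Y - ⟪Y, W⟫ • W‖ ^ 2 = (‖Y‖ * Real.sin (angle Y W)) ^ 2 := by
    rw [@norm_sub_sq_real, real_inner_smul_right, norm_smul, hW]
    simp only [Real.norm_eq_abs, mul_one]
    rw [sq_abs, hYW]
    have := Real.sin_sq_add_cos_sq (angle Y W)
    linear_combination -‖Y‖ ^ 2 * this
  have h2 : 0 ≤ ‖Y‖ * Real.sin (angle Y W) := mul_nonneg (norm_nonneg _) sinY
  nlinarith [norm_nonneg (Y - ⟪Y, W⟫ • W)]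

lemma key_inner_aux (W Y Z : E) (hW : ‖W‖ = 1) :
    ⟪Y, Z⟫ ≤ ‖Y‖ * ‖Z‖ * Real.cos (angle Y W - angle Z W) := by
  have hYW : ⟪Y, W⟫ = ‖Y‖ * Real.cos (angle Y W) := by
    rcases eq_or_ne Y 0 with rfl | hY
    · simp
    · have h0 : ‖Y‖ ≠ 0 := norm_ne_zero_iff.2 hY
      rw [cos_angle, hW]
      field_simp
  have hZW : ⟪Z, W⟫ = ‖Z‖ * Real.cos (angle Z W) := by
    rcases eq_or_ne Z 0 with rfl | hZ
    · simp
    · have h0 : ‖Z‖ ≠ 0 := norm_ne_zero_iff.2 hZ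
      rw [cos_angle, hW]
      field_simp
  have hexp : ⟪Y - ⟪Y, W⟫ • W, Z - ⟪Z, W⟫ • W⟫ = ⟪Y, Z⟫ - ⟪Y, W⟫ * ⟪Z, W⟫ := by
    simp only [inner_sub_left, inner_sub_right, real_inner_smul_left, real_inner_smul_right,
      real_inner_self_eq_norm_sq, hW]
    rw [real_inner_comm W Y, real_inner_comm W Z]
    ring
  have hCS := real_inner_le_norm (Y - ⟪Y, W⟫ • W) (Z - ⟪Z, W⟫ • W)
  rw [hexp, norm_perp_aux W Y hW, norm_perp_aux W Z hW, hYW, hZW] at hCS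
  rw [Real.cos_sub]
  nlinarith [hCS]

lemma vertex_mem_doubleCone {n : ℕ} (p V : EuclideanSpace ℝ (Fin n)) (hV : ‖V‖ = 1) {φ : ℝ}
    (hφ : 0 ≤ φ) : p ∈ doubleCone p V φ := by
  have hV0 : V ≠ 0 := by intro h; rw [h] at hV; simp at hV
  rw [doubleCone, Metric.mem_closure_iff]
  intro ε hε
  refine ⟨p + (ε/2) • V, ?_, ?_⟩
  · left
    rw [add_sub_cancel_left, angle_smul_left_of_pos _ _ (by linarith : (0:ℝ) < ε/2),
      angle_self hV0]
    linarith
  · rw [dist_eq_norm]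
    have heq : p - (p + (ε/2) • V) = -((ε/2) • V) := by abel
    rw [heq, norm_neg, norm_smul, hV, Real.norm_eq_abs,
      abs_of_pos (by linarith : (0:ℝ) < ε/2)]
    linarith

lemma doubleCone_mono {n : ℕ} (p V : EuclideanSpace ℝ (Fin n)) {φ₁ φ₂ : ℝ} (h : φ₁ ≤ φ₂) :
    doubleCone p V φ₁ ⊆ doubleCone p V φ₂ := by
  apply closure_mono
  rintro y (hy | hy)
  · exact Or.inl (by linarith)
  · exact Or.inr (by linarith)

lemma dist_to_doubleCone {n : ℕ} {φ : ℝ} (hφ1 : 0 < φ) (hφ2 : φ ≤ Real.pi)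
    (p V y : EuclideanSpace ℝ (Fin n)) (hV : ‖V‖ = 1)
    (hy : y ∉ doubleCone p V φ) {z : EuclideanSpace ℝ (Fin n)}
    (hz : z ∈ doubleCone p V (φ/2)) :
    ‖y - p‖ * Real.sin (φ/4) ≤ dist y z := by
  have hy' : ¬ (angle (y - p) V ≤ φ / 2 ∨ angle (y - p) (-V) ≤ φ / 2) :=
    fun hmem => hy (subset_closure hmem)
  push_neg at hy'
  have hclosed : IsClosed {z : EuclideanSpace ℝ (Fin n) | ‖y - p‖ * Real.sin (φ/4) ≤ dist y z} :=
    isClosed_le continuous_const (continuous_const.dist continuous_id)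
  refine hclosed.closure_subset_iff.mpr ?_ hz
  rintro z' (hz' | hz')
  all_goals {
    first
      | (have hA : φ / 2 < angle (y - p) V := hy'.1
         have hB : angle (z' - p) V ≤ φ / 4 := by linarith
         set W : EuclideanSpace ℝ (Fin n) := V with hWdef
         have hW : ‖W‖ = 1 := hV)
      | (have hA : φ / 2 < angle (y - p) (-V) := hy'.2
         have hB : angle (z' - p) (-V) ≤ φ / 4 := by linarith
         set W : EuclideanSpace ℝ (Fin n) := -V with hWdef
         have hW : ‖W‖ = 1 := by rw [hWdef, norm_neg]; exact hV)
    have hkey := key_inner_aux W (y - p) (z' - p) hW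
    have hcos : Real.cos (angle (y - p) W - angle (z' - p) W) ≤ Real.cos (φ/4) := by
      apply Real.cos_le_cos_of_nonneg_of_le_pi (by linarith) ?_ (by linarith)
      have := angle_le_pi (y - p) W
      have := angle_nonneg (z' - p) W
      linarith
    have hcos4 : 0 ≤ Real.cos (φ/4) := by
      apply Real.cos_nonneg_of_mem_Icc
      constructor <;> [linarith [Real.pi_pos]; linarith]
    have hsc := Real.sin_sq_add_cos_sq (φ/4)
    have hsin4 : 0 ≤ Real.sin (φ/4) := by
      apply Real.sin_nonneg_of_nonneg_of_le_pi <;> linarith [Real.pi_pos]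
    have hYZ : ⟪y - p, z' - p⟫ ≤ ‖y - p‖ * ‖z' - p‖ * Real.cos (φ/4) := by
      calc ⟪y - p, z' - p⟫
          ≤ ‖y - p‖ * ‖z' - p‖ * Real.cos (angle (y - p) W - angle (z' - p) W) := hkey
        _ ≤ ‖y - p‖ * ‖z' - p‖ * Real.cos (φ/4) := by
            apply mul_le_mul_of_nonneg_left hcos (by positivity)
    have hdist : dist y z' = ‖(y - p) - (z' - p)‖ := by
      rw [dist_eq_norm]; congr 1; abel
    have hsq : (‖y - p‖ * Real.sin (φ/4))^2 ≤ ‖(y - p) - (z' - p)‖^2 := by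
      rw [@norm_sub_sq_real]
      nlinarith [sq_nonneg (‖z' - p‖ - ‖y - p‖ * Real.cos (φ/4)), norm_nonneg (y - p)]
    show ‖y - p‖ * Real.sin (φ/4) ≤ dist y z'
    rw [hdist]
    have h2 : 0 ≤ ‖y - p‖ * Real.sin (φ/4) := mul_nonneg (norm_nonneg _) hsin4
    calc ‖y - p‖ * Real.sin (φ/4) = Real.sqrt ((‖y - p‖ * Real.sin (φ/4))^2) :=
          (Real.sqrt_sq h2).symm
      _ ≤ Real.sqrt (‖(y - p) - (z' - p)‖^2) := Real.sqrt_le_sqrt hsq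
      _ = _ := Real.sqrt_sq (norm_nonneg _)
  }

lemma escape_lemma_aux {X : Type*} [MetricSpace X] {f : ℝ → X} (hf : Continuous f)
    {x t : ℝ} (hxt : x < t) {K : Set X} (hK : IsClosed K) (hx : f x ∈ K) (ht : f t ∉ K) :
    ∃ A k, A.Nonempty ∧ IsPreconnected A ∧ A ⊆ Set.range f ∧ (∀ a ∈ A, a ∉ K) ∧
      f t ∈ A ∧ k ∈ K ∧ k ∈ closure A := by
  set S := Icc x t ∩ f ⁻¹' K with hS
  have hcpt : IsCompact S := isCompact_Icc.inter_right (hK.preimage hf)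
  have hne : S.Nonempty := ⟨x, ⟨le_refl x, hxt.le⟩, hx⟩
  set s := sSup S with hs
  have hsS : s ∈ S := hcpt.sSup_mem hne
  have hst : s < t := lt_of_le_of_ne hsS.1.2 (fun h => ht (h ▸ hsS.2))
  refine ⟨f '' Ioc s t, f s, ⟨f t, t, ⟨hst, le_refl t⟩, rfl⟩,
    isPreconnected_Ioc.image f hf.continuousOn, image_subset_range f _, ?_,
    ⟨t, ⟨hst, le_refl t⟩, rfl⟩, hsS.2, ?_⟩
  · rintro a ⟨u, hu, rfl⟩ haK
    have huS : u ∈ S := ⟨⟨hsS.1.1.trans hu.1.le, hu.2⟩, haK⟩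
    exact absurd (le_csSup hcpt.bddAbove huS) (not_le.mpr hu.1)
  · have h1 : s ∈ closure (Ioc s t) := by
      rw [closure_Ioc hst.ne]; exact ⟨le_refl s, hst.le⟩
    exact image_closure_subset_closure_image hf ⟨s, h1, rfl⟩

lemma hContent_mono {n : ℕ} {A B : Set (EuclideanSpace ℝ (Fin n))} (hAB : A ⊆ B) :
    hContent A ≤ hContent B :=
  le_iInf fun U => le_iInf fun hU => iInf_le_of_le U (iInf_le_of_le (hAB.trans hU) (le_refl _))

lemma hContent_lower {n : ℕ} {A : Set (EuclideanSpace ℝ (Fin n))} (hA : IsPreconnected A)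
    {a b : EuclideanSpace ℝ (Fin n)} (ha : a ∈ A) (hb : b ∈ A) :
    ENNReal.ofReal (dist a b) ≤ hContent A := by
  rcases eq_or_ne a b with rfl | hab
  · simp
  have hn0 : ‖a - b‖ ≠ 0 := norm_ne_zero_iff.2 (sub_ne_zero.2 hab)
  set u := ‖a - b‖⁻¹ • (a - b) with hu
  have hun : ‖u‖ = 1 := by
    rw [hu, norm_smul, norm_inv, norm_norm, inv_mul_cancel₀ hn0]
  set g : EuclideanSpace ℝ (Fin n) → ℝ := fun z => ⟪u, z⟫ with hg
  have hlip : LipschitzWith 1 g := by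
    apply LipschitzWith.of_dist_le_mul
    intro z₁ z₂
    rw [Real.dist_eq, hg]
    simp only
    rw [← inner_sub_right]
    calc |⟪u, z₁ - z₂⟫| ≤ ‖u‖ * ‖z₁ - z₂‖ := abs_real_inner_le_norm u (z₁ - z₂)
      _ = 1 * dist z₁ z₂ := by rw [hun, dist_eq_norm]
  have hgab : g a - g b = ‖a - b‖ := by
    rw [hg]
    simp only
    rw [← inner_sub_right, hu, real_inner_smul_left, real_inner_self_eq_norm_sq]
    field_simp
  refine le_iInf fun U => le_iInf fun hU => ?_
  have himg : IsPreconnected (g '' A) := hA.image g hlip.continuous.continuousOn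
  have hIcc : Icc (g b) (g a) ⊆ g '' A :=
    himg.Icc_subset (mem_image_of_mem g hb) (mem_image_of_mem g ha)
  calc ENNReal.ofReal (dist a b)
      = MeasureTheory.volume (Icc (g b) (g a)) := by
        rw [Real.volume_Icc, hgab, dist_eq_norm]
    _ ≤ MeasureTheory.volume (g '' A) := MeasureTheory.measure_mono hIcc
    _ ≤ MeasureTheory.volume (⋃ i, g '' U i) := by
        apply MeasureTheory.measure_mono
        rw [← image_iUnion]
        exact image_mono hU
    _ ≤ ∑' i, MeasureTheory.volume (g '' U i) := MeasureTheory.measure_iUnion_le _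
    _ ≤ ∑' i, EMetric.diam (U i) := by
        apply ENNReal.tsum_le_tsum
        intro i
        calc MeasureTheory.volume (g '' U i) ≤ EMetric.diam (g '' U i) :=
              Real.volume_le_diam _
          _ ≤ 1 * EMetric.diam (U i) := hlip.ediam_image_le _
          _ = EMetric.diam (U i) := one_mul _

end Aux

set_option maxHeartbeats 1000000 in
theorem geometric_tangent_implies_parametric {n : ℕ}
    (f : ℝ → EuclideanSpace ℝ (Fin n)) (hf : Continuous f)
    (x : ℝ) (V : EuclideanSpace ℝ (Fin n)) (hV : ‖V‖ = 1)
    (h : ∀ φ > 0, Tendsto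
      (fun r : ℝ =>
        hContent ((Set.range f ∩ Metric.ball (f x) r) \ doubleCone (f x) V φ) /
          ENNReal.ofReal r)
      (nhdsWithin 0 (Ioi 0)) (nhds 0)) :
    ∀ φ > 0, ∃ δ > 0, f '' Ioo (x - δ) (x + δ) ⊆ doubleCone (f x) V φ := by
  intro φ hφ
  set ψ := min φ Real.pi with hψdef
  have hψpos : 0 < ψ := lt_min hφ Real.pi_pos
  have hψπ : ψ ≤ Real.pi := min_le_right _ _
  have hψφ : ψ ≤ φ := min_le_left _ _
  suffices hsuff : ∃ δ > 0, f '' Ioo (x - δ) (x + δ) ⊆ doubleCone (f x) V ψ by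
    obtain ⟨δ, hδ, hsub⟩ := hsuff
    exact ⟨δ, hδ, hsub.trans (doubleCone_mono _ _ hψφ)⟩
  by_contra hcon
  push_neg at hcon
  set p := f x with hp
  set s₁ := Real.sin (ψ/4) with hs₁
  have hs₁pos : 0 < s₁ := by
    apply Real.sin_pos_of_pos_of_lt_pi (by linarith)
    linarith [Real.pi_pos]
  set c := min 1 s₁ with hc
  have hcpos : 0 < c := lt_min one_pos hs₁pos
  have hc1 : c ≤ 1 := min_le_left _ _
  have htend := h (ψ/2) (by linarith)
  have hev : ∀ᶠ r in nhdsWithin 0 (Ioi 0),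
      hContent ((Set.range f ∩ Metric.ball p r) \ doubleCone p V (ψ/2)) / ENNReal.ofReal r
        < ENNReal.ofReal (c/4) :=
    htend.eventually_lt_const (by simp [ENNReal.ofReal_pos]; linarith)
  obtain ⟨r₀, hr₀pos, hr₀⟩ : ∃ r₀ > 0, ∀ r ∈ Ioo (0:ℝ) r₀,
      hContent ((Set.range f ∩ Metric.ball p r) \ doubleCone p V (ψ/2)) / ENNReal.ofReal r
        < ENNReal.ofReal (c/4) := by
    rw [eventually_iff, mem_nhdsGT_iff_exists_Ioo_subset] at hev
    obtain ⟨u, hu, hsub⟩ := hev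
    exact ⟨u, hu, fun r hr => hsub hr⟩
  obtain ⟨δ, hδpos, hδ⟩ : ∃ δ > 0, ∀ t, |t - x| < δ → dist (f t) p < r₀/2 := by
    obtain ⟨δ, hδpos, hδ⟩ := Metric.continuous_iff.mp hf x (r₀/2) (by linarith)
    exact ⟨δ, hδpos, fun t ht => hδ t (by rwa [Real.dist_eq])⟩
  obtain ⟨y, hymem, hty⟩ := Set.not_subset.mp (hcon δ hδpos)
  obtain ⟨t, ht, rfl⟩ := hymem
  have htx : |t - x| < δ := abs_sub_lt_iff.mpr ⟨by linarith [ht.2], by linarith [ht.1]⟩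
  set d := dist (f t) p with hd
  have hdpos : 0 < d := by
    rw [hd, dist_pos]
    intro h0
    apply hty
    rw [h0]
    exact vertex_mem_doubleCone p V hV (by linarith)
  have hdr : d < r₀/2 := hδ t htx
  set K := doubleCone p V (ψ/2) ∪ (Metric.ball p (2*d))ᶜ with hK
  have hKclosed : IsClosed K := IsClosed.union isClosed_closure Metric.isOpen_ball.isClosed_compl
  have hpK : f x ∈ K := Or.inl (vertex_mem_doubleCone p V hV (by linarith))
  have hconehalf : doubleCone p V (ψ/2) ⊆ doubleCone p V ψ := doubleCone_mono _ _ (by linarith)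
  have htK : f t ∉ K := by
    rintro (h1 | h2)
    · exact hty (hconehalf h1)
    · exact h2 (by rw [Metric.mem_ball]; rw [hd] at *; linarith)
  have htx' : t ≠ x := fun heq => htK (heq ▸ hpK)
  obtain ⟨A, k, hAne, hAconn, hArange, hAK, hftA, hkK, hkcl⟩ :
      ∃ A k, A.Nonempty ∧ IsPreconnected A ∧ A ⊆ Set.range f ∧ (∀ a ∈ A, a ∉ K) ∧
        f t ∈ A ∧ k ∈ K ∧ k ∈ closure A := by
    rcases lt_or_gt_of_ne htx' with hlt | hgt
    · obtain ⟨A, k, h1, h2, h3, h4, h5, h6, h7⟩ := escape_lemma_aux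
        (f := fun u => f (x + t - u)) (hf.comp (by continuity)) hlt hKclosed
        (by simpa using hpK) (by simpa using htK)
      refine ⟨A, k, h1, h2, ?_, h4, by simpa using h5, h6, h7⟩
      refine h3.trans ?_
      rintro a ⟨u, rfl⟩
      exact ⟨x + t - u, rfl⟩
    · exact escape_lemma_aux hf hgt hKclosed hpK htK
  have hkfar : d * c ≤ dist (f t) k := by
    rcases hkK with hk1 | hk2
    · calc d * c ≤ d * s₁ := mul_le_mul_of_nonneg_left (min_le_right _ _) hdpos.le
        _ = ‖f t - p‖ * Real.sin (ψ/4) := by rw [hd, dist_eq_norm]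
        _ ≤ dist (f t) k := dist_to_doubleCone hψpos hψπ p V (f t) hV hty hk1
    · have h2d : 2*d ≤ dist k p := le_of_not_gt (fun hlt => hk2 (Metric.mem_ball.mpr hlt))
      have := dist_triangle k (f t) p
      rw [dist_comm k (f t)] at this
      calc d * c ≤ d * 1 := mul_le_mul_of_nonneg_left hc1 hdpos.le
        _ = d := mul_one d
        _ ≤ dist (f t) k := by linarith
  obtain ⟨a, haA, hak⟩ : ∃ a ∈ A, dist a k < d*c/2 := by
    rw [Metric.mem_closure_iff] at hkcl
    obtain ⟨a, haA, hak⟩ := hkcl (d*c/2) (by positivity)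
    exact ⟨a, haA, by rwa [dist_comm]⟩
  have hta : d*c/2 ≤ dist (f t) a := by
    have := dist_triangle (f t) a k
    linarith
  have hAsub : A ⊆ (Set.range f ∩ Metric.ball p (2*d)) \ doubleCone p V (ψ/2) := by
    intro a' ha'
    have hnK := hAK a' ha'
    refine ⟨⟨hArange ha', ?_⟩, fun hcone => hnK (Or.inl hcone)⟩
    by_contra hball
    exact hnK (Or.inr hball)
  have hcontent : ENNReal.ofReal (d*c/2) ≤
      hContent ((Set.range f ∩ Metric.ball p (2*d)) \ doubleCone p V (ψ/2)) := by
    calc ENNReal.ofReal (d*c/2) ≤ ENNReal.ofReal (dist (f t) a) := ENNReal.ofReal_le_ofReal hta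
      _ ≤ hContent A := hContent_lower hAconn hftA haA
      _ ≤ _ := hContent_mono hAsub
  have h2dIoo : 2*d ∈ Ioo (0:ℝ) r₀ := ⟨by linarith, by linarith⟩
  have hlt := hr₀ (2*d) h2dIoo
  have hge : ENNReal.ofReal (c/4) ≤
      hContent ((Set.range f ∩ Metric.ball p (2*d)) \ doubleCone p V (ψ/2)) /
        ENNReal.ofReal (2*d) := by
    rw [ENNReal.le_div_iff_mul_le (Or.inl (ENNReal.ofReal_pos.mpr (by linarith)).ne')
      (Or.inl ENNReal.ofReal_ne_top)]
    calc ENNReal.ofReal (c/4) * ENNReal.ofReal (2*d) = ENNReal.ofReal (d*c/2) := by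
          rw [← ENNReal.ofReal_mul (by positivity)]
          congr 1
          ring
      _ ≤ _ := hcontent
  exact absurd hlt (not_lt.mpr hge)
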